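/- Let ρ be a real number with ρ ∉ [0,1] (so ρ(1−ρ) < 0), let f, g be negative real numbers, and let ω > 0. If the two roots μ₊, μ₋ of the quadratic ρx² − γ(ω)x + (1−ρ) = 0 satisfy |μ₊| = |μ₋|, then f + g² < 0 and ω² = f²/(−f−g²), and moreover 4|ρ(1−ρ)| ≥ −g²/(f+g²). -/

import Mathlib

/-- `γ(ω) = (f + iωg + ω²)/(f + iωg)`. -/
noncomputable def gam (f g ω : ℝ) : ℂ :=
  ((f : ℂ) + Complex.I * ω * g + (ω : ℂ) ^ 2) / ((f : ℂ) + Complex.I * ω * g)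

theorem stmt_16 (ρ : ℝ) (hρ : ρ ∉ Set.Icc (0 : ℝ) 1) (f g : ℝ)
    (hf : f < 0) (hg : g < 0) (ω : ℝ) (hω : 0 < ω) (μp μm : ℂ)
    (hroots : ∀ x : ℂ, (ρ : ℂ) * x ^ 2 - gam f g ω * x + (1 - (ρ : ℂ))
      = (ρ : ℂ) * (x - μp) * (x - μm))
    (habs : ‖μp‖ = ‖μm‖) :
    f + g ^ 2 < 0 ∧ ω ^ 2 = f ^ 2 / (-f - g ^ 2) ∧
      4 * |ρ * (1 - ρ)| ≥ -g ^ 2 / (f + g ^ 2) := by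
  simp only [Set.mem_Icc, not_and_or, not_le] at hρ
  have hρn : ρ * (1 - ρ) < 0 := by rcases hρ with h | h <;> nlinarith
  have hρ0 : ρ ≠ 0 := by rcases hρ with h | h <;> nlinarith
  have h0 := hroots 0
  have h1 := hroots 1
  have h2 := hroots (-1)
  have hprod : (ρ : ℂ) * (μp * μm) = 1 - ρ := by linear_combination -h0
  have hsum : (ρ : ℂ) * (μp + μm) = gam f g ω := by linear_combination (h1 - h2) / 2
  set cr : ℝ := (1 - ρ) / ρ with hcr_def
  have hcrρ : cr * ρ = 1 - ρ := by rw [hcr_def, div_mul_cancel₀ _ hρ0]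
  have hcr : cr < 0 := by
    rcases hρ with h | h
    · apply div_neg_of_pos_of_neg <;> linarith
    · apply div_neg_of_neg_of_pos <;> linarith
  have hρC : (ρ : ℂ) ≠ 0 := by exact_mod_cast hρ0
  have hc : μp * μm = ((cr : ℝ) : ℂ) := by
    have h' : (ρ : ℂ) * (μp * μm) = (ρ : ℂ) * cr := by
      rw [hprod]
      have hh : ((cr * ρ : ℝ) : ℂ) = ((1 - ρ : ℝ) : ℂ) := by exact_mod_cast hcrρ
      push_cast at hh ⊢
      linear_combination -hh
    exact mul_left_cancel₀ hρC h'
  have habs2 : ‖μp‖ ^ 2 = -cr := by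
    have h' := congrArg (‖·‖) hc
    rw [norm_mul, Complex.norm_real, Real.norm_eq_abs, abs_of_neg hcr] at h'
    rw [sq, habs]; rw [habs] at h'; exact h'
  have hμp0 : μp ≠ 0 := by
    intro h
    rw [h] at habs2
    simp at habs2
    linarith
  have hconj : (starRingEnd ℂ) μp = -μm := by
    have h1' : μp * (starRingEnd ℂ) μp = ((-cr : ℝ) : ℂ) := by
      rw [Complex.mul_conj]
      norm_cast
      rw [← habs2, Complex.sq_norm]
    have h2' : μp * ((starRingEnd ℂ) μp + μm) = 0 := by
      rw [mul_add, h1', hc]; push_cast; ring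
    rcases mul_eq_zero.mp h2' with h | h
    · exact absurd h hμp0
    · linear_combination h
  -- γ is purely imaginary: γ = (2 ρ m) I where m = im μp
  have hsc := Complex.sub_conj μp
  push_cast at hsc
  set m : ℝ := μp.im with hm_def
  have hγ : gam f g ω = ((2 * ρ * m : ℝ) : ℂ) * Complex.I := by
    rw [← hsum]
    push_cast
    linear_combination (ρ : ℂ) * hsc + (ρ : ℂ) * hconj
  have hkey : (((2 * ρ * m : ℝ) : ℂ) * Complex.I) * ((f : ℂ) + Complex.I * ω * g)
      = (f : ℂ) + Complex.I * ω * g + (ω : ℂ) ^ 2 := by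
    have hd0 : ((f : ℂ) + Complex.I * ω * g) ≠ 0 := by
      intro h
      have := congrArg Complex.re h
      simp at this
      linarith
    rw [← hγ]
    unfold gam
    field_simp
  set t : ℝ := 2 * ρ * m with ht_def
  have hre := congrArg Complex.re hkey
  have him := congrArg Complex.im hkey
  simp [Complex.add_re, Complex.add_im, Complex.mul_re, Complex.mul_im,
    ← Complex.ofReal_pow] at hre him
  have e1 : t * f = ω * g := by linarith [him]
  have e2 : t * (ω * g) = -(f + ω ^ 2) := by linarith [hre]
  have hkey2 : ω ^ 2 * g ^ 2 = -f ^ 2 - ω ^ 2 * f := by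
    linear_combination f * e2 - ω * g * e1
  have hfg : f + g ^ 2 < 0 := by
    by_contra h
    push_neg at h
    nlinarith [hkey2, mul_nonneg (sq_nonneg ω) h, mul_pos_of_neg_of_neg hf hf]
  refine ⟨hfg, ?_, ?_⟩
  · rw [eq_div_iff (ne_of_gt (by linarith : (0:ℝ) < -f - g ^ 2))]
    linear_combination -hkey2
  · have hsq1 : t ^ 2 * f ^ 2 = ω ^ 2 * g ^ 2 := by
      linear_combination (t * f + ω * g) * e1
    have hw : ω ^ 2 * (f + g ^ 2) = -f ^ 2 := by linear_combination hkey2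
    have hf2 : f ^ 2 ≠ 0 := pow_ne_zero 2 (ne_of_lt hf)
    have ht2 : t ^ 2 = -g ^ 2 / (f + g ^ 2) := by
      rw [eq_div_iff (ne_of_lt hfg)]
      have hmain : (t ^ 2 * (f + g ^ 2) + g ^ 2) * f ^ 2 = 0 := by
        linear_combination (f + g ^ 2) * hsq1 + g ^ 2 * hw
      rcases mul_eq_zero.mp hmain with h | h
      · linarith
      · exact absurd h hf2
    have hm2 : m ^ 2 ≤ -cr := by
      have hsa := Complex.sq_norm μp
      rw [Complex.normSq_apply] at hsa
      nlinarith [habs2, sq_nonneg μp.re]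
    have habsρ : |ρ * (1 - ρ)| = ρ ^ 2 - ρ := by
      rw [abs_of_neg hρn]; ring
    rw [habsρ, ge_iff_le, ← ht2]
    have hcreq : ρ ^ 2 * (-cr) = ρ ^ 2 - ρ := by
      rw [hcr_def]
      field_simp
      ring
    have hb : ρ ^ 2 * m ^ 2 ≤ ρ ^ 2 - ρ := by
      calc ρ ^ 2 * m ^ 2 ≤ ρ ^ 2 * (-cr) :=
            mul_le_mul_of_nonneg_left hm2 (sq_nonneg ρ)
        _ = ρ ^ 2 - ρ := hcreq
    have htt : t ^ 2 = 4 * (ρ ^ 2 * m ^ 2) := by rw [ht_def]; ring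
    linarith
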